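/- Let K be a commutative ring, n ≥ 2, R = K[x,y]/(y^n), with G_a-coaction φ(x̄) = x̄ + ȳ·z, φ(ȳ) = ȳ. Then for every 0 < d < n, the element s = x̄^d is a local slice of degree d with denominator c = ȳ^d, and the localization R_c is the zero ring; moreover every local slice in R has nilpotent denominator. -/

import Mathlib

open Polynomial

def IsGaCoaction {R : Type*} [CommRing R] (φ : R →+* Polynomial R) : Prop :=
  (∀ s : R, (φ s).eval 0 = s) ∧
  (∀ s : R, (φ s).map φ =
      (φ s).eval₂ ((Polynomial.C : Polynomial R →+* Polynomial (Polynomial R)).comp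
        Polynomial.C) (Polynomial.X + Polynomial.C Polynomial.X))

/-- on `R = K[x,y]/(y^n)` (with `n ≥ 2`), the coaction `φ(x̄) = x̄ + ȳ z`,
`φ(ȳ) = ȳ` is a `G_a`-coaction; for `0 < d < n` the element `s = x̄^d` is a local slice
of degree `d` with denominator `c = ȳ^d`, and the localization `R_c` is the zero ring
(so the local slice condition on `R_c` holds vacuously); moreover every local slice
(indeed every noninvariant) has nilpotent denominator (leading coefficient). -/
theorem stmt4 {K : Type*} [CommRing K] [Nontrivial K] (n : ℕ) (hn : 2 ≤ n)
    (q : MvPolynomial (Fin 2) K →+*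
      MvPolynomial (Fin 2) K ⧸ Ideal.span {(MvPolynomial.X 1 : MvPolynomial (Fin 2) K) ^ n})
    (hq : q = Ideal.Quotient.mk (Ideal.span {(MvPolynomial.X 1 : MvPolynomial (Fin 2) K) ^ n}))
    (φ : (MvPolynomial (Fin 2) K ⧸ Ideal.span {(MvPolynomial.X 1 : MvPolynomial (Fin 2) K) ^ n}) →+*
      Polynomial (MvPolynomial (Fin 2) K ⧸
        Ideal.span {(MvPolynomial.X 1 : MvPolynomial (Fin 2) K) ^ n}))
    (hx : φ (q (MvPolynomial.X 0)) =
      Polynomial.C (q (MvPolynomial.X 0)) + Polynomial.C (q (MvPolynomial.X 1)) * Polynomial.X)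
    (hy : φ (q (MvPolynomial.X 1)) = Polynomial.C (q (MvPolynomial.X 1)))
    (hK : ∀ k : K, φ (q (MvPolynomial.C k)) = Polynomial.C (q (MvPolynomial.C k))) :
    IsGaCoaction φ ∧
    (∀ d : ℕ, 0 < d → d < n →
      φ (q (MvPolynomial.X 0) ^ d) ≠ Polynomial.C (q (MvPolynomial.X 0) ^ d) ∧
      (φ (q (MvPolynomial.X 0) ^ d)).degree = d ∧
      (φ (q (MvPolynomial.X 0) ^ d)).leadingCoeff = q (MvPolynomial.X 1) ^ d ∧
      Subsingleton (Localization.Away (q (MvPolynomial.X 1) ^ d))) ∧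
    (∀ s : MvPolynomial (Fin 2) K ⧸
        Ideal.span {(MvPolynomial.X 1 : MvPolynomial (Fin 2) K) ^ n},
      φ s ≠ Polynomial.C s → IsNilpotent ((φ s).leadingCoeff)) := by
  have hqsurj : Function.Surjective q := by
    rw [hq]; exact Ideal.Quotient.mk_surjective
  have hyn : q (MvPolynomial.X 1) ^ n = 0 := by
    rw [hq, ← map_pow, Ideal.Quotient.eq_zero_iff_mem]
    exact Ideal.subset_span rfl
  -- y^d ≠ 0 for d < n
  have hyd : ∀ d : ℕ, d < n → q (MvPolynomial.X 1) ^ d ≠ 0 := by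
    intro d hd h0
    rw [hq, ← map_pow, Ideal.Quotient.eq_zero_iff_mem, Ideal.mem_span_singleton] at h0
    obtain ⟨f, hf⟩ := h0
    have h1 := congrArg (MvPolynomial.aeval (fun _ : Fin 2 => (Polynomial.X : Polynomial K))) hf
    simp only [map_mul, map_pow, MvPolynomial.aeval_X] at h1
    have hc := congrArg (fun p : Polynomial K => p.coeff d) h1
    rw [Polynomial.coeff_X_pow, if_pos rfl, mul_comm, Polynomial.coeff_mul_X_pow',
      if_neg (by omega)] at hc
    exact one_ne_zero hc
  -- counit
  have hcounit : ∀ s, (φ s).eval 0 = s := by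
    have h : (Polynomial.evalRingHom 0).comp φ = RingHom.id _ := by
      rw [← RingHom.cancel_right hqsurj]
      apply MvPolynomial.ringHom_ext
      · intro k
        simp [RingHom.comp_apply, hK k]
      · intro i
        fin_cases i
        · show ((Polynomial.evalRingHom 0).comp φ).comp q (MvPolynomial.X 0)
            = (RingHom.id _).comp q (MvPolynomial.X 0)
          simp [RingHom.comp_apply, hx]
        · show ((Polynomial.evalRingHom 0).comp φ).comp q (MvPolynomial.X 1)
            = (RingHom.id _).comp q (MvPolynomial.X 1)
          simp [RingHom.comp_apply, hy]
    intro s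
    exact RingHom.congr_fun h s
  -- coassociativity
  have hcoassoc : (φ 1 = φ 1) → ∀ s, (φ s).map φ =
      (φ s).eval₂ ((Polynomial.C).comp Polynomial.C)
        (Polynomial.X + Polynomial.C Polynomial.X) := by
    intro _
    letI : CommSemiring (Polynomial (Polynomial (MvPolynomial (Fin 2) K ⧸ Ideal.span {(MvPolynomial.X 1 : MvPolynomial (Fin 2) K) ^ n}))) := @Polynomial.commSemiring _ (@Polynomial.commSemiring _ (Ideal.Quotient.commSemiring _))
    have h : (Polynomial.mapRingHom φ).comp φ =
        (Polynomial.eval₂RingHom ((Polynomial.C : Polynomial (MvPolynomial (Fin 2) K ⧸ Ideal.span {(MvPolynomial.X 1 : MvPolynomial (Fin 2) K) ^ n}) →+* Polynomial (Polynomial (MvPolynomial (Fin 2) K ⧸ Ideal.span {(MvPolynomial.X 1 : MvPolynomial (Fin 2) K) ^ n}))).comp Polynomial.C)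
          (Polynomial.X + Polynomial.C Polynomial.X)).comp φ := by
      rw [← RingHom.cancel_right hqsurj]
      apply MvPolynomial.ringHom_ext
      · intro k
        simp [RingHom.comp_apply, hK k]
      · intro i
        fin_cases i
        · show (Polynomial.mapRingHom φ) (φ (q (MvPolynomial.X 0)))
            = (Polynomial.eval₂RingHom ((Polynomial.C : Polynomial (MvPolynomial (Fin 2) K ⧸ Ideal.span {(MvPolynomial.X 1 : MvPolynomial (Fin 2) K) ^ n}) →+* Polynomial (Polynomial (MvPolynomial (Fin 2) K ⧸ Ideal.span {(MvPolynomial.X 1 : MvPolynomial (Fin 2) K) ^ n}))).comp Polynomial.C)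
                (Polynomial.X + Polynomial.C Polynomial.X)) (φ (q (MvPolynomial.X 0)))
          simp only [hx, Polynomial.coe_mapRingHom, Polynomial.coe_eval₂RingHom,
            Polynomial.map_add, Polynomial.map_mul, Polynomial.map_C, Polynomial.map_X,
            Polynomial.eval₂_add, Polynomial.eval₂_mul, Polynomial.eval₂_C,
            Polynomial.eval₂_X, hy, RingHom.comp_apply, Polynomial.C_add, Polynomial.C_mul]
          ring
        · show (Polynomial.mapRingHom φ) (φ (q (MvPolynomial.X 1)))
            = (Polynomial.eval₂RingHom ((Polynomial.C : Polynomial (MvPolynomial (Fin 2) K ⧸ Ideal.span {(MvPolynomial.X 1 : MvPolynomial (Fin 2) K) ^ n}) →+* Polynomial (Polynomial (MvPolynomial (Fin 2) K ⧸ Ideal.span {(MvPolynomial.X 1 : MvPolynomial (Fin 2) K) ^ n}))).comp Polynomial.C)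
                (Polynomial.X + Polynomial.C Polynomial.X)) (φ (q (MvPolynomial.X 1)))
          simp [hy, RingHom.comp_apply]
    intro s
    have h2 := RingHom.congr_fun h s
    simpa using h2
  refine ⟨⟨hcounit, hcoassoc rfl⟩, ?_, ?_⟩
  · -- local slice x^d
    intro d hd0 hdn
    have hbne : q (MvPolynomial.X 1) ≠ 0 := by
      intro h
      exact hyd 1 (by omega) (by rwa [pow_one])
    have hφsd : φ (q (MvPolynomial.X 0) ^ d) =
        (Polynomial.C (q (MvPolynomial.X 1)) * Polynomial.X
          + Polynomial.C (q (MvPolynomial.X 0))) ^ d := by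
      rw [map_pow, hx, add_comm]
    have hlc : (Polynomial.C (q (MvPolynomial.X 1)) * Polynomial.X
        + Polynomial.C (q (MvPolynomial.X 0))).leadingCoeff ^ d ≠ 0 := by
      rw [Polynomial.leadingCoeff_linear hbne]
      exact hyd d hdn
    have hdeg : (φ (q (MvPolynomial.X 0) ^ d)).degree = d := by
      rw [hφsd, Polynomial.degree_pow' hlc, Polynomial.degree_linear hbne]
      simp
    have hlead : (φ (q (MvPolynomial.X 0) ^ d)).leadingCoeff = q (MvPolynomial.X 1) ^ d := by
      rw [hφsd, Polynomial.leadingCoeff_pow' hlc, Polynomial.leadingCoeff_linear hbne]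
    refine ⟨?_, hdeg, hlead, ?_⟩
    · intro h
      have hd2 := hdeg
      rw [h] at hd2
      rcases eq_or_ne (q (MvPolynomial.X 0) ^ d) 0 with h0 | h0
      · rw [h0, map_zero, Polynomial.degree_zero] at hd2
        exact (by simp : (⊥ : WithBot ℕ) ≠ (d : WithBot ℕ)) hd2
      · rw [Polynomial.degree_C h0] at hd2
        have : (0 : ℕ) = d := by exact_mod_cast hd2
        omega
    · refine IsLocalization.subsingleton (M := Submonoid.powers (q (MvPolynomial.X 1) ^ d))
        (S := Localization.Away (q (MvPolynomial.X 1) ^ d)) ⟨n, ?_⟩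
      show (q (MvPolynomial.X 1) ^ d) ^ n = 0
      rw [← pow_mul, mul_comm, pow_mul, hyn, zero_pow hd0.ne']
  · -- nilpotent leading coefficient
    intro s hs
    have hnil : ∀ t ∈ Ideal.span {q (MvPolynomial.X 1)}, IsNilpotent t := by
      intro t ht
      rw [Ideal.mem_span_singleton] at ht
      obtain ⟨r, hr⟩ := ht
      exact ⟨n, by rw [hr, mul_pow, hyn, zero_mul]⟩
    have hmul : ∀ a b,
        (∀ i, 1 ≤ i → (φ a).coeff i ∈ Ideal.span {q (MvPolynomial.X 1)}) →
        (∀ i, 1 ≤ i → (φ b).coeff i ∈ Ideal.span {q (MvPolynomial.X 1)}) →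
        ∀ i, 1 ≤ i → (φ (a * b)).coeff i ∈ Ideal.span {q (MvPolynomial.X 1)} := by
      intro a b ha hb i hi
      rw [map_mul, Polynomial.coeff_mul]
      refine Ideal.sum_mem _ ?_
      rintro ⟨j, k⟩ hjk
      rw [Finset.HasAntidiagonal.mem_antidiagonal] at hjk
      rcases Nat.eq_zero_or_pos j with hj | hj
      · exact Ideal.mul_mem_left _ _ (hb k (by omega))
      · exact Ideal.mul_mem_right _ _ (ha j hj)
    have key : ∀ p : MvPolynomial (Fin 2) K, ∀ i, 1 ≤ i →
        (φ (q p)).coeff i ∈ Ideal.span {q (MvPolynomial.X 1)} := by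
      intro p
      induction p using MvPolynomial.induction_on with
      | C k =>
          intro i hi
          rw [hK k, Polynomial.coeff_C, if_neg (by omega)]
          exact Ideal.zero_mem _
      | add p1 p2 h1 h2 =>
          intro i hi
          rw [map_add, map_add, Polynomial.coeff_add]
          exact Ideal.add_mem _ (h1 i hi) (h2 i hi)
      | mul_X p j h =>
          rw [map_mul]
          refine hmul _ _ h ?_
          intro i hi
          fin_cases j
          · show (φ (q (MvPolynomial.X 0))).coeff i ∈ Ideal.span {q (MvPolynomial.X 1)}
            rw [hx]
            rcases eq_or_ne i 1 with h1 | h1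
            · subst h1
              simp only [Polynomial.coeff_add, Polynomial.coeff_C, if_neg one_ne_zero,
                Polynomial.coeff_C_mul, Polynomial.coeff_X_one, mul_one, zero_add]
              exact Ideal.subset_span rfl
            · simp only [Polynomial.coeff_add, Polynomial.coeff_C, if_neg (by omega : ¬ i = 0),
                Polynomial.coeff_C_mul, Polynomial.coeff_X, if_neg (Ne.symm h1), mul_zero,
                add_zero]
              exact Ideal.zero_mem _
          · show (φ (q (MvPolynomial.X 1))).coeff i ∈ Ideal.span {q (MvPolynomial.X 1)}
            rw [hy, Polynomial.coeff_C, if_neg (by omega)]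
            exact Ideal.zero_mem _
    have hnd : 1 ≤ (φ s).natDegree := by
      by_contra h
      push_neg at h
      have h0 : (φ s).natDegree = 0 := by omega
      have hC := Polynomial.eq_C_of_natDegree_eq_zero h0
      have hc0 : (φ s).coeff 0 = s := by
        have he := hcounit s
        rw [hC] at he
        simpa using he
      exact hs (by rw [hC, hc0])
    obtain ⟨p, rfl⟩ := hqsurj s
    rw [Polynomial.leadingCoeff]
    exact hnil _ (key p _ hnd)
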